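/- Let 𝒢 be a GRN with associated PRN ℛ. A node τ ∈ V is a super-simple node of 𝒢 if and only if both (τ,R) and (τ,P) are super-simple nodes of ℛ. -/

import Mathlib

open List Relation

/- In the PRN on `V × Bool`, the node `(v, false)` is the mRNA node `v^R`
   and `(v, true)` is the protein node `v^P`. -/

/-- Arrow relation of the PRN associated to a GRN with arrow relation `E`:
arrows `(v,R) → (v,P)` for every `v`, and `(u,P) → (v,R)` whenever `E u v`. -/
def prnAdj {V : Type*} (E : V → V → Prop) : V × Bool → V × Bool → Prop :=
  fun a b =>
    (a.1 = b.1 ∧ a.2 = false ∧ b.2 = true) ∨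
    (E a.1 b.1 ∧ a.2 = true ∧ b.2 = false)

/-- The lift of a path `σ₁ → ⋯ → σ_m` in the GRN to the path
`(σ₁,R) → (σ₁,P) → ⋯ → (σ_m,R) → (σ_m,P)` in the PRN. -/
def liftPath {V : Type*} (l : List V) : List (V × Bool) :=
  l.flatMap fun v => [(v, false), (v, true)]

/-- A simple path: a nonempty directed path visiting each node at most once. -/
def IsSimplePath {V : Type*} (E : V → V → Prop) (l : List V) : Prop :=
  l ≠ [] ∧ l.Chain' E ∧ l.Nodup

/-- A simple path from `a` to `b`. -/
def IsSimplePathFrom {V : Type*} (E : V → V → Prop) (a b : V) (l : List V) : Prop :=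
  IsSimplePath E l ∧ l.head? = some a ∧ l.getLast? = some b

/-- A node is simple if it lies on some simple path from the input to the output. -/
def IsSimpleNode {V : Type*} (E : V → V → Prop) (ι o v : V) : Prop :=
  ∃ l, IsSimplePathFrom E ι o l ∧ v ∈ l

/-- A node is super-simple if it lies on every simple path from the input to the output. -/
def IsSuperSimpleNode {V : Type*} (E : V → V → Prop) (ι o v : V) : Prop :=
  ∀ l, IsSimplePathFrom E ι o l → v ∈ l

/-- A node is appendage if it lies on no simple path from the input to the output. -/
def IsAppendageNode {V : Type*} (E : V → V → Prop) (ι o v : V) : Prop :=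
  ¬ IsSimpleNode E ι o v

/-- An appendage path from `a` to `b`: a simple path from `a` to `b` each of whose
nodes, except possibly `a` and `b`, is an appendage node. -/
def IsAppendagePath {V : Type*} (E : V → V → Prop) (ι o a b : V) (l : List V) : Prop :=
  IsSimplePathFrom E a b l ∧ ∀ v ∈ l, v ≠ a → v ≠ b → IsAppendageNode E ι o v

/-- A directed cycle: a nonempty closed directed walk visiting each of its nodes
exactly once (a self-loop is a cycle of length one). -/
def IsCycle {V : Type*} (E : V → V → Prop) (c : List V) : Prop :=
  c ≠ [] ∧ c.Chain' E ∧ c.Nodup ∧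
    ∃ a b, c.head? = some a ∧ c.getLast? = some b ∧ E b a

/-- Arrow relation of the appendage subnetwork: the induced subgraph on appendage nodes. -/
def appendageAdj {V : Type*} (E : V → V → Prop) (ι o : V) : V → V → Prop :=
  fun a b => E a b ∧ IsAppendageNode E ι o a ∧ IsAppendageNode E ι o b

/-- Two appendage nodes are path-equivalent if each is reachable from the other by a
directed path lying entirely within the appendage subnetwork. -/
def PathEquiv {V : Type*} (E : V → V → Prop) (ι o a b : V) : Prop :=
  Relation.ReflTransGen (appendageAdj E ι o) a b ∧
  Relation.ReflTransGen (appendageAdj E ι o) b a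

/-- A node `x` is between `a` and `b` if some input-to-output simple path visits
`a`, `x`, `b` in that order. -/
def Between {V : Type*} (E : V → V → Prop) (ι o a x b : V) : Prop :=
  ∃ l, IsSimplePathFrom E ι o l ∧ [a, x, b].Sublist l

section Aux
variable {V : Type*} (E : V → V → Prop)

@[simp] lemma liftPath_nil : liftPath ([] : List V) = [] := rfl

@[simp] lemma liftPath_cons (v : V) (l : List V) :
    liftPath (v :: l) = (v, false) :: (v, true) :: liftPath l := rfl

lemma mem_liftPath (v : V) (b : Bool) (l : List V) :
    (v, b) ∈ liftPath l ↔ v ∈ l := by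
  induction l with
  | nil => simp
  | cons u l ih => cases b <;> simp [ih, Prod.ext_iff]

lemma nodup_liftPath (l : List V) : (liftPath l).Nodup ↔ l.Nodup := by
  induction l with
  | nil => simp
  | cons u l ih =>
    simp [ih, mem_liftPath, Prod.ext_iff]


lemma chain_liftPath (l : List V) :
    (liftPath l).Chain' (prnAdj E) ↔ l.Chain' E := by
  induction l with
  | nil => simp [List.Chain']
  | cons u l ih =>
    cases l with
    | nil => simp [prnAdj, List.Chain']
    | cons w l =>
      simp only [liftPath_cons, List.Chain', List.isChain_cons_cons] at ih ⊢
      constructor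
      · rintro ⟨-, h2, h3⟩
        refine ⟨?_, ih.1 h3⟩
        rcases h2 with ⟨-, -, h⟩ | ⟨h, -, -⟩
        · simp at h
        · exact h
      · rintro ⟨h1, h2⟩
        exact ⟨Or.inl ⟨rfl, rfl, rfl⟩, Or.inr ⟨h1, rfl, rfl⟩, ih.2 h2⟩

lemma head?_liftPath (l : List V) :
    (liftPath l).head? = l.head?.map (fun v => (v, false)) := by
  cases l <;> simp

lemma getLast?_liftPath (l : List V) :
    (liftPath l).getLast? = l.getLast?.map (fun v => (v, true)) := by
  induction l with
  | nil => simp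
  | cons u l ih =>
    cases l with
    | nil => simp [liftPath]
    | cons w l =>
      rw [liftPath_cons]
      rw [List.getLast?_cons_cons, List.getLast?_cons_cons] at *
      rw [← ih]
      cases l <;> simp [liftPath]

lemma exists_lift : ∀ (m : List (V × Bool)), m.Chain' (prnAdj E) →
    ∀ a b : V, m.head? = some (a, false) → m.getLast? = some (b, true) →
    ∃ l, m = liftPath l
  | [] => by simp
  | [x] => by
    intro _ a b h1 h2
    simp at h1 h2
    rw [h1] at h2
    simp [Prod.ext_iff] at h2
  | x :: y :: rest => by
    intro hc a b h1 h2
    simp only [List.head?_cons, Option.some.injEq] at h1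
    subst h1
    rw [List.Chain', List.isChain_cons_cons] at hc
    obtain ⟨hxy, hc⟩ := hc
    have hy : y = (a, true) := by
      rcases hxy with ⟨h1, -, h3⟩ | ⟨-, h2, -⟩
      · exact Prod.ext h1.symm h3
      · simp at h2
    subst hy
    cases rest with
    | nil => exact ⟨[a], rfl⟩
    | cons z rest' =>
      rw [List.isChain_cons_cons] at hc
      obtain ⟨hyz, hc⟩ := hc
      have hz : z.2 = false := by
        rcases hyz with ⟨-, h2, -⟩ | ⟨-, -, h3⟩
        · simp at h2
        · exact h3
      have hlast : (z :: rest').getLast? = some (b, true) := by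
        rw [List.getLast?_cons_cons, List.getLast?_cons_cons] at h2
        exact h2
      obtain ⟨l, hl⟩ := exists_lift (z :: rest') hc z.1 b
        (by simp [← hz]) hlast
      exact ⟨a :: l, by simp [hl]⟩

end Aux

lemma liftPath_ne_nil {V : Type*} {l : List V} (h : l ≠ []) : liftPath l ≠ [] := by
  cases l with
  | nil => exact absurd rfl h
  | cons u l => simp


/-- A node `τ` is a super-simple node of the GRN if and only if both
`(τ,R)` and `(τ,P)` are super-simple nodes of the PRN. -/
theorem stmt_5 {V : Type*} [Fintype V] (E : V → V → Prop) (ι o τ : V) :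
    IsSuperSimpleNode E ι o τ ↔
      (IsSuperSimpleNode (prnAdj E) (ι, false) (o, true) (τ, false) ∧
       IsSuperSimpleNode (prnAdj E) (ι, false) (o, true) (τ, true)) := by
  constructor
  · intro h
    have key : ∀ (b : Bool) (m : List (V × Bool)),
        IsSimplePathFrom (prnAdj E) (ι, false) (o, true) m → (τ, b) ∈ m := by
      rintro b m ⟨⟨hne, hch, hnd⟩, hh, hl⟩
      obtain ⟨l, rfl⟩ := exists_lift E m hch ι o hh hl
      rw [head?_liftPath] at hh
      rw [getLast?_liftPath] at hl
      simp only [Option.map_eq_some_iff, Prod.mk.injEq] at hh hl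
      obtain ⟨a, ha, ha', -⟩ := hh
      obtain ⟨c, hc, hc', -⟩ := hl
      have hlne : l ≠ [] := by rintro rfl; exact hne rfl
      have := h l ⟨⟨hlne, (chain_liftPath E l).1 hch, (nodup_liftPath l).1 hnd⟩,
        by rw [ha, ha'], by rw [hc, hc']⟩
      exact (mem_liftPath τ b l).2 this
    exact ⟨key false, key true⟩
  · rintro ⟨h1, -⟩ l ⟨⟨hne, hch, hnd⟩, hh, hl⟩
    have := h1 (liftPath l) ⟨⟨liftPath_ne_nil hne, (chain_liftPath E l).2 hch,
      (nodup_liftPath l).2 hnd⟩,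
      by rw [head?_liftPath, hh]; rfl,
      by rw [getLast?_liftPath, hl]; rfl⟩
    exact (mem_liftPath τ false l).1 this
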